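/- For n ∈ ℤ define the Malmquist–Takenaka functions φₙ(x) = √(2/π) · iⁿ · (1 + 2ix)ⁿ / (1 − 2ix)^{n+1} for x ∈ ℝ. Then for every n ∈ ℤ and all x ∈ ℝ: φₙ′(x) = −n φ_{n−1}(x) + i(2n+1) φₙ(x) + (n+1) φ_{n+1}(x). That is, the Malmquist–Takenaka system satisfies the tridiagonal skew-Hermitian differentiation relation with bₙ = n+1 and cₙ = 2n+1. -/

import Mathlib

/-- The Malmquist–Takenaka functions `φₙ(x) = √(2/π) iⁿ (1+2ix)ⁿ/(1−2ix)^{n+1}`, `n ∈ ℤ`. -/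
noncomputable def malmquistTakenaka (n : ℤ) (x : ℝ) : ℂ :=
  (Real.sqrt (2 / Real.pi) : ℂ) * Complex.I ^ n *
    (1 + 2 * Complex.I * x) ^ n / (1 - 2 * Complex.I * x) ^ (n + 1)

open Complex
lemma aux_ne (x : ℝ) : (1 + 2 * Complex.I * x ≠ 0) ∧ (1 - 2 * Complex.I * x ≠ 0) := by
  constructor <;>
  · intro h
    have := congrArg Complex.re h
    simp [Complex.add_re, Complex.mul_re] at this

/-- the Malmquist–Takenaka functions satisfy the tridiagonal skew-Hermitian
differentiation relation `φₙ′ = −n φ_{n−1} + i(2n+1) φₙ + (n+1) φ_{n+1}`. -/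
theorem malmquistTakenaka_hasDerivAt (n : ℤ) (x : ℝ) :
    HasDerivAt (malmquistTakenaka n)
      (-(n : ℂ) * malmquistTakenaka (n - 1) x
        + Complex.I * (2 * (n : ℂ) + 1) * malmquistTakenaka n x
        + ((n : ℂ) + 1) * malmquistTakenaka (n + 1) x) x := by
  obtain ⟨hu, hv⟩ := aux_ne x
  set c : ℂ := (Real.sqrt (2 / Real.pi) : ℂ) * Complex.I ^ n with hc
  -- inner derivatives over ℂ
  have h1 : HasDerivAt (fun z : ℂ => 1 + 2 * Complex.I * z) (2 * Complex.I) (x : ℂ) := by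
    simpa using ((hasDerivAt_id (x : ℂ)).const_mul (2 * Complex.I)).const_add 1
  have h2 : HasDerivAt (fun z : ℂ => 1 - 2 * Complex.I * z) (-(2 * Complex.I)) (x : ℂ) := by
    simpa using ((hasDerivAt_id (x : ℂ)).const_mul (2 * Complex.I)).const_sub 1
  have hu' : HasDerivAt (fun z : ℂ => (1 + 2 * Complex.I * z) ^ n)
      ((n : ℂ) * (1 + 2 * Complex.I * x) ^ (n - 1) * (2 * Complex.I)) (x : ℂ) := by
    exact (hasDerivAt_zpow n _ (Or.inl hu)).comp (x:ℂ) h1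
  have hv' : HasDerivAt (fun z : ℂ => (1 - 2 * Complex.I * z) ^ (-(n + 1)))
      (((-(n + 1) : ℤ) : ℂ) * (1 - 2 * Complex.I * x) ^ (-(n + 1) - 1) * (-(2 * Complex.I)))
      (x : ℂ) := by
    exact (hasDerivAt_zpow (-(n + 1)) _ (Or.inl hv)).comp (x:ℂ) h2
  have hF : HasDerivAt (fun z : ℂ => c * ((1 + 2 * Complex.I * z) ^ n *
      (1 - 2 * Complex.I * z) ^ (-(n + 1))))
      (c * (((n : ℂ) * (1 + 2 * Complex.I * x) ^ (n - 1) * (2 * Complex.I)) *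
          (1 - 2 * Complex.I * x) ^ (-(n + 1)) +
        (1 + 2 * Complex.I * x) ^ n *
          ((((-(n + 1) : ℤ) : ℂ)) * (1 - 2 * Complex.I * x) ^ (-(n + 1) - 1) * (-(2 * Complex.I)))))
      (x : ℂ) := (hu'.mul hv').const_mul c
  have hR := hF.comp_ofReal
  convert hR using 1
  · funext y
    obtain ⟨hu2, hv2⟩ := aux_ne y
    rw [malmquistTakenaka, ← hc, div_eq_mul_inv, ← zpow_neg, mul_assoc]
  · simp only [malmquistTakenaka, ← hc]
    have hI : (Complex.I : ℂ) ≠ 0 := Complex.I_ne_zero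
    have e1 : Complex.I ^ (n - 1) = Complex.I ^ n * Complex.I⁻¹ := by
      rw [zpow_sub₀ hI, zpow_one]; ring
    have e2 : Complex.I ^ (n + 1) = Complex.I ^ n * Complex.I := by
      rw [zpow_add₀ hI, zpow_one]
    have eu : (1 + 2 * Complex.I * x : ℂ) ^ n
        = (1 + 2 * Complex.I * x) ^ (n - 1) * (1 + 2 * Complex.I * x) := by
      rw [← zpow_add_one₀ hu]; ring_nf
    have eu2 : (1 + 2 * Complex.I * x : ℂ) ^ (n + 1)
        = (1 + 2 * Complex.I * x) ^ (n - 1) * (1 + 2 * Complex.I * x) ^ 2 := by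
      rw [← zpow_natCast _ 2, ← zpow_add₀ hu]; ring_nf
    have ev : (1 - 2 * Complex.I * x : ℂ) ^ ((n - 1) + 1)
        = (1 - 2 * Complex.I * x) ^ n := by ring_nf
    have ev1 : (1 - 2 * Complex.I * x : ℂ) ^ (n + 1)
        = (1 - 2 * Complex.I * x) ^ n * (1 - 2 * Complex.I * x) := by
      rw [← zpow_add_one₀ hv]
    have ev2 : (1 - 2 * Complex.I * x : ℂ) ^ ((n + 1) + 1)
        = (1 - 2 * Complex.I * x) ^ n * (1 - 2 * Complex.I * x) ^ 2 := by
      rw [← zpow_natCast _ 2, ← zpow_add₀ hv]; ring_nf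
    have ev3 : (1 - 2 * Complex.I * x : ℂ) ^ (-(n + 1))
        = ((1 - 2 * Complex.I * x) ^ n * (1 - 2 * Complex.I * x))⁻¹ := by
      rw [zpow_neg, ev1]
    have ev4 : (1 - 2 * Complex.I * x : ℂ) ^ (-(n + 1) - 1)
        = ((1 - 2 * Complex.I * x) ^ n * (1 - 2 * Complex.I * x) ^ 2)⁻¹ := by
      rw [show (-(n+1) - 1 : ℤ) = -((n+1)+1) by ring, zpow_neg, ev2]
    rw [e1, e2, eu, eu2, ev, ev1, ev2, ev3, ev4, Complex.inv_I]
    have hvn : (1 - 2 * Complex.I * x : ℂ) ^ n ≠ 0 := zpow_ne_zero _ hv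
    push_cast
    rw [hc]
    generalize (Real.sqrt (2 / Real.pi) : ℂ) = s
    generalize Complex.I ^ n = J
    generalize (1 + 2 * Complex.I * (x:ℂ)) ^ (n - 1) = P
    generalize hQ' : (1 - 2 * Complex.I * (x:ℂ)) ^ n = Q at hvn ⊢
    generalize hw : 2 * Complex.I * (x:ℂ) = w at hv ⊢
    field_simp
    ring
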